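/- Let M = SM(U) be a loopless and coloopless Schubert matroid on [n] of rank r. (a) The map sending a Delannoy path P associated to SM(U) to the pair (B_P, D_P), where D_P is the set of indices of the diagonal steps of P, is injective. (b) A Delannoy path P associated to SM(U) is admissible if and only if the basis B_P of M satisfies i(B_P) = 0 and e(B_P) = 1. -/

import Mathlib

open scoped Classical

namespace GPoly

/-- A step of a Delannoy path: east `+(1,0)`, north `+(0,1)` or diagonal `+(1,1)`. -/
inductive DStep : Type
  | east : DStep
  | north : DStep
  | diag : DStep
  deriving DecidableEq

/-- Horizontal displacement of a step. -/
def DStep.dx : DStep → ℕ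
  | .east => 1
  | .north => 0
  | .diag => 1

/-- Vertical displacement of a step. -/
def DStep.dy : DStep → ℕ
  | .east => 0
  | .north => 1
  | .diag => 1

/-- Position reached after the first `k` steps of `P`, starting at the point `s`. -/
def pathPos (s : ℕ × ℕ) (P : List DStep) (k : ℕ) : ℕ × ℕ :=
  (s.1 + ((P.take k).map DStep.dx).sum, s.2 + ((P.take k).map DStep.dy).sum)

/-- The Gale order: `U ≤ B` iff the increasing enumerations satisfy `u_ℓ ≤ b_ℓ`. -/
def galeLe {α : Type*} [LinearOrder α] (U B : Finset α) : Prop :=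
  List.Forall₂ (· ≤ ·) (U.sort (· ≤ ·)) (B.sort (· ≤ ·))

/-- Bases of the Schubert matroid `SM(U)` of rank `r` on `[n] = {1, …, n}`:
all `r`-subsets `B` of `[n]` with `U ≤ B` in the Gale order. -/
noncomputable def schubertBases (n r : ℕ) (U : Finset ℕ) : Finset (Finset ℕ) :=
  (Finset.Icc 1 n).powerset.filter fun B => B.card = r ∧ galeLe U B

/-- The point `p` lies weakly below the lattice path `path(U)`. -/
def belowPath (U : Finset ℕ) (p : ℕ × ℕ) : Prop :=
  p.2 ≤ (U ∩ Finset.Icc 1 (p.1 + p.2)).card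

/-- `path(U)` traverses the vertical unit segment from `(x, y)` to `(x, y+1)`
(by its north step number `x + y + 1`). -/
def uVertSeg (U : Finset ℕ) (x y : ℕ) : Prop :=
  x + y + 1 ∈ U ∧ (U ∩ Finset.Icc 1 (x + y + 1)).card = y + 1

/-- A Delannoy path associated to `SM(U)`: starts at `(1,1)`, ends at `(n-r, r)` and
stays weakly below `path(U)`. -/
def IsDelannoy (n r : ℕ) (U : Finset ℕ) (P : List DStep) : Prop :=
  pathPos (1, 1) P P.length = (n - r, r) ∧
    ∀ k ≤ P.length, belowPath U (pathPos (1, 1) P k)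

/-- Admissible Delannoy path associated to `SM(U)`. -/
def IsAdmissible (n r : ℕ) (U : Finset ℕ) (P : List DStep) : Prop :=
  IsDelannoy n r U P ∧
    ∀ (k : ℕ) (h : k < P.length),
      (P.get ⟨k, h⟩ = DStep.north →
        pathPos (1, 1) P (k + 1) = (n - r, r) ∨
          ¬ uVertSeg U (pathPos (1, 1) P k).1 (pathPos (1, 1) P k).2) ∧
      (P.get ⟨k, h⟩ = DStep.diag →
        belowPath U ((pathPos (1, 1) P k).1, (pathPos (1, 1) P k).2 + 1) ∧
          ¬ uVertSeg U (pathPos (1, 1) P k).1 (pathPos (1, 1) P k).2)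

/-- Number of diagonal steps of a path. -/
def diagCount (P : List DStep) : ℕ := (P.filter (· = DStep.diag)).length

/-- The set of indices (0-based) of the diagonal steps of `P`. -/
def diagIndices (P : List DStep) : Finset ℕ :=
  (Finset.range P.length).filter fun k => P.getD k DStep.east = DStep.diag

/-- Replace a diagonal step by a north step followed by an east step. -/
def expandNE : DStep → List DStep
  | DStep.diag => [DStep.north, DStep.east]
  | s => [s]

/-- Replace a diagonal step by an east step followed by a north step. -/
def expandEN : DStep → List DStep
  | DStep.diag => [DStep.east, DStep.north]
  | s => [s]

/-- The full lattice path of `B_P`: an east step, a north step, then the steps of `P`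
with each diagonal step replaced by a north step immediately followed by an east step. -/
def fullPath (P : List DStep) : List DStep :=
  DStep.east :: DStep.north :: (P.map expandNE).flatten

/-- The subset of `[n]` whose `path` is the given (diagonal-free) list of steps:
the set of (1-based) positions of the north steps. -/
def northSet (L : List DStep) : Finset ℕ :=
  ((Finset.range L.length).filter fun k => L.getD k DStep.east = DStep.north).image (· + 1)

/-- The basis `B_P` associated to a Delannoy path `P`. -/
def delannoyBasis (P : List DStep) : Finset ℕ := northSet (fullPath P)

/-! ### Matroid notions for a family of bases -/

/-- `S` is independent for the basis family `ℬ`: it is contained in some basis. -/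
def famIndep (ℬ : Finset (Finset ℕ)) (S : Finset ℕ) : Prop := ∃ B ∈ ℬ, S ⊆ B

/-- `C` is a circuit for the basis family `ℬ`: a minimal dependent set. -/
def famCircuit (ℬ : Finset (Finset ℕ)) (C : Finset ℕ) : Prop :=
  ¬ famIndep ℬ C ∧ ∀ C' ⊂ C, famIndep ℬ C'

/-- The dual basis family on the ground set `E`: complements of bases. -/
noncomputable def famDual (E : Finset ℕ) (ℬ : Finset (Finset ℕ)) : Finset (Finset ℕ) :=
  ℬ.image fun B => E \ B

/-- `e ∉ B` is externally active: `e` is the smallest element of the unique circuit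
contained in `B ∪ {e}`. -/
def ExtActive (E : Finset ℕ) (ℬ : Finset (Finset ℕ)) (B : Finset ℕ) (e : ℕ) : Prop :=
  e ∈ E ∧ e ∉ B ∧
    ∃ C, C ⊆ insert e B ∧ famCircuit ℬ C ∧ e ∈ C ∧ ∀ x ∈ C, e ≤ x

/-- `i ∈ B` is internally active: `i` is the smallest element of the unique cocircuit
contained in `(E ∖ B) ∪ {i}`. -/
def IntActive (E : Finset ℕ) (ℬ : Finset (Finset ℕ)) (B : Finset ℕ) (i : ℕ) : Prop :=
  i ∈ B ∧
    ∃ C, C ⊆ insert i (E \ B) ∧ famCircuit (famDual E ℬ) C ∧ i ∈ C ∧ ∀ x ∈ C, i ≤ x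

/-- External activity `e(B)`. -/
noncomputable def extAct (E : Finset ℕ) (ℬ : Finset (Finset ℕ)) (B : Finset ℕ) : ℕ :=
  (E.filter (ExtActive E ℬ B)).card

/-- Internal activity `i(B)`. -/
noncomputable def intAct (E : Finset ℕ) (ℬ : Finset (Finset ℕ)) (B : Finset ℕ) : ℕ :=
  (E.filter (IntActive E ℬ B)).card

/-- The statistic `α(B)`: the number of `i ∈ B` such that `B' = (B ∖ {i}) ∪ {i+1}`
is a basis with `e(B') = e(B)` and `i(B') = i(B)`. -/
noncomputable def alphaStat (E : Finset ℕ) (ℬ : Finset (Finset ℕ)) (B : Finset ℕ) : ℕ :=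
  (B.filter fun i =>
    insert (i + 1) (B.erase i) ∈ ℬ ∧
      extAct E ℬ (insert (i + 1) (B.erase i)) = extAct E ℬ B ∧
      intAct E ℬ (insert (i + 1) (B.erase i)) = intAct E ℬ B).card

/-- The rank function determined by a family of bases. -/
noncomputable def famRank (ℬ : Finset (Finset ℕ)) (A : Finset ℕ) : ℕ :=
  ℬ.sup fun B => (A ∩ B).card

/-- The β-invariant: `β(M) = (−1)^{rk(E)} Σ_{A ⊆ E} (−1)^{|A|} rk(A)`. -/
noncomputable def betaInv (E : Finset ℕ) (ℬ : Finset (Finset ℕ)) : ℤ :=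
  (-1) ^ famRank ℬ E * ∑ A ∈ E.powerset, (-1) ^ A.card * (famRank ℬ A : ℤ)

/-- `ℬ` is the collection of bases of a matroid with ground set `E`:
it is a nonempty family of subsets of `E` satisfying the basis exchange property. -/
def IsBasisFamily (E : Finset ℕ) (ℬ : Finset (Finset ℕ)) : Prop :=
  ℬ.Nonempty ∧ (∀ B ∈ ℬ, B ⊆ E) ∧
    ∀ B₁ ∈ ℬ, ∀ B₂ ∈ ℬ, ∀ x ∈ B₁ \ B₂, ∃ y ∈ B₂ \ B₁, insert y (B₁.erase x) ∈ ℬ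

/-- Two elements lie in a common component: they are equal or in a common circuit. -/
def connRel (ℬ : Finset (Finset ℕ)) (e f : ℕ) : Prop :=
  e = f ∨ ∃ C, famCircuit ℬ C ∧ e ∈ C ∧ f ∈ C

/-- The number of connected components of the matroid with bases `ℬ` on `E`. -/
noncomputable def numComponents (E : Finset ℕ) (ℬ : Finset (Finset ℕ)) : ℕ :=
  Set.ncard {S : Set ℕ | ∃ e ∈ E, S = {f | f ∈ E ∧ Relation.EqvGen (connRel ℬ) e f}}

/-- The matroid with bases `ℬ` on ground set `E` is connected. -/
def IsConnectedFam (E : Finset ℕ) (ℬ : Finset (Finset ℕ)) : Prop :=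
  E.Nonempty ∧ ∀ e ∈ E, ∀ f ∈ E, Relation.EqvGen (connRel ℬ) e f

/-- Series-parallel matroid: isomorphic to `U_{0,1}` or `U_{1,1}`
(a single loop or a single coloop), or connected with β-invariant `1`. -/
def IsSeriesParallel (E : Finset ℕ) (ℬ : Finset (Finset ℕ)) : Prop :=
  (E.card = 1 ∧ (ℬ = {∅} ∨ ℬ = {E})) ∨ (IsConnectedFam E ℬ ∧ betaInv E ℬ = 1)

/-- The bases of the restriction of the matroid with bases `ℬ` to the set `F`:
the maximal intersections of bases with `F`. -/
noncomputable def famRestrict (ℬ : Finset (Finset ℕ)) (F : Finset ℕ) : Finset (Finset ℕ) :=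
  (ℬ.image (· ∩ F)).filter fun S => ∀ T ∈ ℬ.image (· ∩ F), S ⊆ T → S = T

/-- The matroid with bases `ℬ` on `E` is a direct sum of series-parallel matroids. -/
def IsDirectSumOfSeriesParallel (E : Finset ℕ) (ℬ : Finset (Finset ℕ)) : Prop :=
  ∃ parts : Finset (Finset ℕ),
    (↑parts : Set (Finset ℕ)).PairwiseDisjoint id ∧
    parts.sup id = E ∧
    (∀ S ∈ parts, IsSeriesParallel S (famRestrict ℬ S)) ∧
    ℬ = E.powerset.filter fun B => ∀ S ∈ parts, B ∩ S ∈ famRestrict ℬ S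

/-! ### Base polytopes -/

/-- The indicator vector of `B ⊆ E`, as a point of `ℝ^E`. -/
noncomputable def basisVector (E : Finset ℕ) (B : Finset ℕ) : ↑E → ℝ :=
  fun e => if (e : ℕ) ∈ B then 1 else 0

/-- The base polytope of the matroid with bases `ℬ` on `E`:
the convex hull in `ℝ^E` of the indicator vectors of the bases. -/
noncomputable def basePolytope (E : Finset ℕ) (ℬ : Finset (Finset ℕ)) : Set (↑E → ℝ) :=
  convexHull ℝ (basisVector E '' (↑ℬ : Set (Finset ℕ)))

/-- The indicator function `ℝ^E → ℤ` of the base polytope. -/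
noncomputable def polyInd (E : Finset ℕ) (ℬ : Finset (Finset ℕ)) : (↑E → ℝ) → ℤ :=
  fun x => if x ∈ basePolytope E ℬ then 1 else 0

/-- The indicator function `ℝ^E → ℤ` of the relative interior of the base polytope. -/
noncomputable def relintInd (E : Finset ℕ) (ℬ : Finset (Finset ℕ)) : (↑E → ℝ) → ℤ :=
  fun x => if x ∈ intrinsicInterior ℝ (basePolytope E ℬ) then 1 else 0

/-! ### Cyclic flats and the cyclic chain lattice -/

/-- `F` is a flat of the matroid with bases `ℬ` on `E`. -/
def IsFlat (E : Finset ℕ) (ℬ : Finset (Finset ℕ)) (F : Finset ℕ) : Prop :=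
  F ⊆ E ∧ ∀ e ∈ E, famRank ℬ (insert e F) = famRank ℬ F → e ∈ F

/-- `F` is a cyclic flat: a flat whose restriction has no coloops. -/
def IsCyclicFlat (E : Finset ℕ) (ℬ : Finset (Finset ℕ)) (F : Finset ℕ) : Prop :=
  IsFlat E ℬ F ∧ ∀ e ∈ F, ¬ (∀ S ∈ famRestrict ℬ F, e ∈ S)

/-- The set of cyclic flats. -/
noncomputable def cyclicFlats (E : Finset ℕ) (ℬ : Finset (Finset ℕ)) : Finset (Finset ℕ) :=
  E.powerset.filter (IsCyclicFlat E ℬ)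

/-- A chain of cyclic flats containing the minimum and maximum of the lattice of
cyclic flats; these are the elements (other than the top `1̂`) of the cyclic
chain lattice. -/
def IsCyclicChain (E : Finset ℕ) (ℬ : Finset (Finset ℕ)) (C : Finset (Finset ℕ)) : Prop :=
  ↑C ⊆ (cyclicFlats E ℬ : Set (Finset ℕ)) ∧ IsChain (· ⊆ ·) (↑C : Set (Finset ℕ)) ∧
    (∃ F ∈ C, ∀ G ∈ cyclicFlats E ℬ, F ⊆ G) ∧
    (∃ F ∈ C, ∀ G ∈ cyclicFlats E ℬ, G ⊆ F)

/-- The set of chains of cyclic flats containing the minimum and the maximum. -/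
noncomputable def cyclicChains (E : Finset ℕ) (ℬ : Finset (Finset ℕ)) :
    Finset (Finset (Finset ℕ)) :=
  (cyclicFlats E ℬ).powerset.filter (IsCyclicChain E ℬ)

/-- The rank function `A ↦ min_{Z ∈ C} (rk_M(Z) + |A ∖ Z|)` associated to a chain `C`. -/
noncomputable def chainRank (ℬ : Finset (Finset ℕ)) (C : Finset (Finset ℕ))
    (A : Finset ℕ) : ℕ :=
  if h : C.Nonempty then C.inf' h fun Z => famRank ℬ Z + (A \ Z).card else A.card

/-- The bases of the matroid on `E` with rank function `rk`:
the subsets `B ⊆ E` with `rk B = |B| = rk E`. -/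
noncomputable def basesOfRank (E : Finset ℕ) (rk : Finset ℕ → ℕ) : Finset (Finset ℕ) :=
  E.powerset.filter fun B => rk B = B.card ∧ rk B = rk E

/-- The bases of the Schubert matroid `S_C` associated to a chain `C` of cyclic flats. -/
noncomputable def chainSchubert (E : Finset ℕ) (ℬ : Finset (Finset ℕ))
    (C : Finset (Finset ℕ)) : Finset (Finset ℕ) :=
  basesOfRank E (chainRank ℬ C)

/-- The point reached by `path(S)` after `k` steps. -/
def pathPoint (S : Finset ℕ) (k : ℕ) : ℕ × ℕ :=
  (k - (S ∩ Finset.Icc 1 k).card, (S ∩ Finset.Icc 1 k).card)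

/-! ### Auxiliary development -/

open Finset in
/-- Prefix count. -/
def cnt (X : Finset ℕ) (k : ℕ) : ℕ := (X ∩ Finset.Icc 1 k).card

lemma cnt_zero (X : Finset ℕ) : cnt X 0 = 0 := by simp [cnt]

lemma cnt_succ (X : Finset ℕ) (k : ℕ) :
    cnt X (k + 1) = cnt X k + if k + 1 ∈ X then 1 else 0 := by
  classical
  unfold cnt
  have h : Finset.Icc 1 (k + 1) = insert (k + 1) (Finset.Icc 1 k) := by
    rw [← Finset.insert_Icc_right_eq_Icc_add_one (by omega)]
  rw [h]
  by_cases hx : k + 1 ∈ X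
  · rw [Finset.inter_insert_of_mem hx, Finset.card_insert_of_notMem (by simp)]
    simp [hx]
  · rw [Finset.inter_insert_of_notMem hx]; simp [hx]

lemma cnt_mono (X : Finset ℕ) {j k : ℕ} (h : j ≤ k) : cnt X j ≤ cnt X k := by
  induction k with
  | zero => have : j = 0 := by omega
            subst this; exact le_rfl
  | succ k ih =>
    rcases Nat.lt_or_ge j (k+1) with h'|h'
    · have := ih (by omega); rw [cnt_succ]; omega
    · have : j = k + 1 := by omega
      subst this; exact le_rfl

lemma cnt_le_add (X : Finset ℕ) {a b : ℕ} (h : a ≤ b) : cnt X b ≤ cnt X a + (b - a) := by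
  induction b with
  | zero => have : a = 0 := by omega
            subst this; simp
  | succ b ih =>
    rcases Nat.lt_or_ge a (b+1) with h'|h'
    · have := ih (by omega); rw [cnt_succ]; split <;> omega
    · have : a = b + 1 := by omega
      subst this; simp

lemma cnt_interval (X : Finset ℕ) {a b : ℕ} (h : a ≤ b)
    (hall : ∀ t, a < t → t ≤ b → t ∈ X) : cnt X a + (b - a) ≤ cnt X b := by
  induction b with
  | zero => have : a = 0 := by omega
            subst this; simp
  | succ b ih =>
    rcases Nat.lt_or_ge a (b+1) with h'|h'
    · have h2 := ih (by omega) (fun t ht1 ht2 => hall t ht1 (by omega))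
      rw [cnt_succ]
      have h3 := hall (b+1) (by omega) le_rfl
      simp [h3]; omega
    · have : a = b + 1 := by omega
      subst this; simp

lemma mem_of_cnt_succ (X : Finset ℕ) {k : ℕ} (h : cnt X k < cnt X (k+1)) : k + 1 ∈ X := by
  rw [cnt_succ] at h; by_contra hx; simp [hx] at h

lemma cnt_of_ge {X : Finset ℕ} {n k : ℕ} (hX : X ⊆ Finset.Icc 1 n) (h : n ≤ k) :
    cnt X k = X.card := by
  unfold cnt
  congr 1
  rw [Finset.inter_eq_left]
  intro x hx
  have := hX hx
  simp only [Finset.mem_Icc] at *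
  omega

lemma cnt_le_self (X : Finset ℕ) (k : ℕ) : cnt X k ≤ k := by
  calc cnt X k ≤ (Finset.Icc 1 k).card := Finset.card_le_card (Finset.inter_subset_right)
  _ = k := by rw [Nat.card_Icc]; omega

lemma cnt_add_suffix {X : Finset ℕ} {n : ℕ} (hX : X ⊆ Finset.Icc 1 n) (k : ℕ) :
    cnt X k + (X ∩ Finset.Icc (k+1) n).card = X.card := by
  classical
  rw [cnt, ← Finset.card_union_of_disjoint]
  · congr 1
    ext x
    simp only [Finset.mem_union, Finset.mem_inter, Finset.mem_Icc]
    constructor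
    · rintro (⟨h, _⟩ | ⟨h, _⟩) <;> exact h
    · intro hx
      have := hX hx
      simp only [Finset.mem_Icc] at this
      by_cases hxk : x ≤ k
      · left; exact ⟨hx, by omega⟩
      · right; exact ⟨hx, by omega⟩
  · apply Finset.disjoint_left.2
    intro x hx hx'
    simp only [Finset.mem_inter, Finset.mem_Icc] at hx hx'
    omega

lemma suffix_card_le (X : Finset ℕ) (k n : ℕ) :
    (X ∩ Finset.Icc (k+1) n).card ≤ n - k := by
  calc (X ∩ Finset.Icc (k+1) n).card ≤ (Finset.Icc (k+1) n).card :=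
        Finset.card_le_card Finset.inter_subset_right
  _ = n - k := by rw [Nat.card_Icc]; omega

lemma suffix_empty (X : Finset ℕ) {k n : ℕ} (h : n ≤ k) :
    (X ∩ Finset.Icc (k+1) n).card = 0 := by
  rw [Finset.card_eq_zero, Finset.eq_empty_iff_forall_notMem]
  intro x hx
  simp only [Finset.mem_inter, Finset.mem_Icc] at hx
  omega

lemma cnt_insert {X : Finset ℕ} {y : ℕ} (hy : y ∉ X) (hy1 : 1 ≤ y) (k : ℕ) :
    cnt (insert y X) k = cnt X k + if y ≤ k then 1 else 0 := by
  classical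
  unfold cnt
  by_cases h : y ≤ k
  · rw [Finset.insert_inter_of_mem (by simp [Finset.mem_Icc]; omega)]
    rw [Finset.card_insert_of_notMem (by simp [hy])]
    simp [h]
  · rw [Finset.insert_inter_of_notMem (by simp [Finset.mem_Icc]; omega)]
    simp [h]

lemma cnt_erase {X : Finset ℕ} {i : ℕ} (hi : i ∈ X) (hi1 : 1 ≤ i) (k : ℕ) :
    cnt X k = cnt (X.erase i) k + if i ≤ k then 1 else 0 := by
  classical
  have h1 : i ∉ X.erase i := Finset.notMem_erase _ _
  have h2 : insert i (X.erase i) = X := Finset.insert_erase hi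
  nth_rewrite 1 [← h2]
  rw [cnt_insert h1 hi1]

lemma cnt_sdiff {B : Finset ℕ} {n k : ℕ} (hB : B ⊆ Finset.Icc 1 n) (hk : k ≤ n) :
    cnt (Finset.Icc 1 n \ B) k + cnt B k = k := by
  classical
  unfold cnt
  rw [← Finset.card_union_of_disjoint]
  · have : (Finset.Icc 1 n \ B) ∩ Finset.Icc 1 k ∪ B ∩ Finset.Icc 1 k = Finset.Icc 1 k := by
      ext x
      simp only [Finset.mem_union, Finset.mem_inter, Finset.mem_sdiff, Finset.mem_Icc]
      constructor
      · rintro (⟨⟨h1, _⟩, h2⟩ | ⟨h1, h2⟩) <;> omega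
      · intro hx
        by_cases hxB : x ∈ B
        · right; exact ⟨hxB, hx⟩
        · left; exact ⟨⟨by omega, hxB⟩, hx⟩
    rw [this, Nat.card_Icc]; omega
  · apply Finset.disjoint_left.2
    intro x hx hx'
    simp only [Finset.mem_inter, Finset.mem_sdiff] at hx hx'
    exact hx.1.2 hx'.1

/-! ### Gale order vs prefix counts -/

lemma forall₂_countP {u b : List ℕ} (h : List.Forall₂ (· ≤ ·) u b) (k : ℕ) :
    b.countP (fun x => x ≤ k) ≤ u.countP (fun x => x ≤ k) := by
  induction h with
  | nil => simp
  | cons hab _ ih =>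
    rename_i a a' l l' _
    rw [List.countP_cons, List.countP_cons]
    simp only [decide_eq_true_eq]
    have hite : (if a' ≤ k then 1 else 0) ≤ (if a ≤ k then (1:ℕ) else 0) := by
      by_cases h1 : a' ≤ k
      · simp [h1, le_trans hab h1]
      · simp [h1]
    exact Nat.add_le_add ih hite

lemma forall₂_iff_countP {u b : List ℕ} (hu : u.Pairwise (· ≤ ·)) (hb : b.Pairwise (· ≤ ·))
    (hlen : u.length = b.length) :
    List.Forall₂ (· ≤ ·) u b ↔ ∀ k, b.countP (fun x => x ≤ k) ≤ u.countP (fun x => x ≤ k) := by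
  constructor
  · intro h k
    exact forall₂_countP h k
  · induction u generalizing b with
    | nil =>
      intro _
      have : b = [] := List.eq_nil_of_length_eq_zero (by simpa using hlen.symm)
      subst this; exact List.Forall₂.nil
    | cons a u' ih =>
      intro hcount
      cases b with
      | nil => simp at hlen
      | cons a' b' =>
        have hle : a ≤ a' := by
          by_contra hcon
          push_neg at hcon
          have h1 : 1 ≤ (a' :: b').countP (fun x => x ≤ a') := by
            rw [List.countP_cons]
            simp
          have h2 := hcount a'
          have h3 : ∀ x ∈ a :: u', ¬ (x ≤ a') := by
            intro x hx
            rcases List.mem_cons.1 hx with rfl | hx'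
            · omega
            · have := (List.pairwise_cons.1 hu).1 x hx'
              omega
          have : (a :: u').countP (fun x => x ≤ a') = 0 := by
            rw [List.countP_eq_zero]
            intro x hx
            simpa using h3 x hx
          omega
        refine List.Forall₂.cons hle ?_
        apply ih (List.pairwise_cons.1 hu).2 (List.pairwise_cons.1 hb).2 (by simpa using hlen)
        intro k
        have h2 := hcount k
        rw [List.countP_cons, List.countP_cons] at h2
        by_cases hk : a' ≤ k
        · have hak : a ≤ k := le_trans hle hk
          simp [hk, hak] at h2
          omega
        · have : b'.countP (fun x => x ≤ k) = 0 := by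
            rw [List.countP_eq_zero]
            intro x hx
            have := (List.pairwise_cons.1 hb).1 x hx
            simp; omega
          omega

lemma cnt_eq_countP {X : Finset ℕ} (hX : ∀ x ∈ X, 1 ≤ x) (k : ℕ) :
    cnt X k = (X.sort (· ≤ ·)).countP (fun x => x ≤ k) := by
  classical
  have h1 : X ∩ Finset.Icc 1 k = X.filter (fun x => x ≤ k) := by
    ext x
    simp only [Finset.mem_inter, Finset.mem_Icc, Finset.mem_filter]
    exact ⟨fun ⟨h, h'⟩ => ⟨h, h'.2⟩, fun ⟨h, h'⟩ => ⟨h, hX x h, h'⟩⟩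
  rw [cnt, h1]
  rw [List.countP_eq_length_filter]
  have h2 : ((X.sort (· ≤ ·)).filter (fun x => x ≤ k)).toFinset = X.filter (fun x => x ≤ k) := by
    ext x
    simp [List.mem_filter, Finset.mem_filter]
  rw [← h2]
  rw [List.toFinset_card_of_nodup]
  exact (Finset.sort_nodup _ _).filter _

lemma galeLe_iff_cnt {U B : Finset ℕ} (hU : ∀ x ∈ U, 1 ≤ x) (hB : ∀ x ∈ B, 1 ≤ x)
    (hcard : U.card = B.card) :
    galeLe U B ↔ ∀ k, cnt B k ≤ cnt U k := by
  rw [galeLe, forall₂_iff_countP (Finset.pairwise_sort _ _) (Finset.pairwise_sort _ _)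
    (by rw [Finset.length_sort, Finset.length_sort, hcard])]
  constructor
  · intro h k; rw [cnt_eq_countP hU, cnt_eq_countP hB]; exact h k
  · intro h k; rw [← cnt_eq_countP hU, ← cnt_eq_countP hB]; exact h k

lemma mem_SB {n r : ℕ} {U : Finset ℕ} (hUsub : U ⊆ Finset.Icc 1 n) (hUcard : U.card = r)
    {B : Finset ℕ} :
    B ∈ schubertBases n r U ↔
      B ⊆ Finset.Icc 1 n ∧ B.card = r ∧ ∀ k, cnt B k ≤ cnt U k := by
  rw [schubertBases, Finset.mem_filter, Finset.mem_powerset]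
  constructor
  · rintro ⟨h1, h2, h3⟩
    refine ⟨h1, h2, ?_⟩
    rw [← galeLe_iff_cnt (fun x hx => (Finset.mem_Icc.1 (hUsub hx)).1)
      (fun x hx => (Finset.mem_Icc.1 (h1 hx)).1) (by omega)]
    exact h3
  · rintro ⟨h1, h2, h3⟩
    refine ⟨h1, h2, ?_⟩
    rw [galeLe_iff_cnt (fun x hx => (Finset.mem_Icc.1 (hUsub hx)).1)
      (fun x hx => (Finset.mem_Icc.1 (h1 hx)).1) (by omega)]
    exact h3

/-! ### Top elements of a finset -/

/-- The `m` largest elements of `T`. -/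
def topOf (T : Finset ℕ) (m : ℕ) : Finset ℕ :=
  ((T.sort (· ≤ ·)).drop (T.card - m)).toFinset

lemma topOf_subset (T : Finset ℕ) (m : ℕ) : topOf T m ⊆ T := by
  intro x hx
  rw [topOf, List.mem_toFinset] at hx
  have := List.mem_of_mem_drop hx
  rwa [Finset.mem_sort] at this

lemma topOf_card {T : Finset ℕ} {m : ℕ} (h : m ≤ T.card) : (topOf T m).card = m := by
  rw [topOf, List.toFinset_card_of_nodup ((Finset.sort_nodup _ _).sublist (List.drop_sublist _ _))]
  rw [List.length_drop, Finset.length_sort]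
  omega

lemma topOf_closed {T : Finset ℕ} {m x y : ℕ} (hx : x ∈ topOf T m) (hy : y ∈ T)
    (hxy : x ≤ y) : y ∈ topOf T m := by
  classical
  rw [topOf, List.mem_toFinset] at hx ⊢
  by_contra hcon
  have hy' : y ∈ (T.sort (· ≤ ·)).take (T.card - m) := by
    have : y ∈ T.sort (· ≤ ·) := by rwa [Finset.mem_sort]
    rw [← List.take_append_drop (T.card - m) (T.sort (· ≤ ·)), List.mem_append] at this
    tauto
  have hpw : List.Pairwise (· ≤ ·) (T.sort (· ≤ ·)) := Finset.pairwise_sort _ _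
  rw [← List.take_append_drop (T.card - m) (T.sort (· ≤ ·)), List.pairwise_append] at hpw
  have h1 : y ≤ x := hpw.2.2 y hy' x hx
  have : y = x := by omega
  subst this
  exact hcon hx

/-! ### Independence characterisations -/

lemma famIndep_mono {ℬ : Finset (Finset ℕ)} {S S' : Finset ℕ} (h : S ⊆ S')
    (h' : famIndep ℬ S') : famIndep ℬ S := by
  obtain ⟨B, hB, hS⟩ := h'
  exact ⟨B, hB, h.trans hS⟩

section Char

variable {n r : ℕ} {U : Finset ℕ}

/-- Completion of a "below" set to a basis. -/
lemma exists_basis_superset (hUsub : U ⊆ Finset.Icc 1 n) (hUcard : U.card = r)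
    {S : Finset ℕ} (hS : S ⊆ Finset.Icc 1 n) (hcnt : ∀ k, cnt S k ≤ cnt U k) :
    ∃ B ∈ schubertBases n r U, S ⊆ B := by
  classical
  have hrn : r ≤ n := by
    have := Finset.card_le_card hUsub
    rwa [hUcard, Nat.card_Icc, Nat.add_sub_cancel] at this
  have hSr : S.card ≤ r := by
    have h1 := hcnt n
    rwa [cnt_of_ge hS le_rfl, cnt_of_ge hUsub le_rfl, hUcard] at h1
  set T := Finset.Icc 1 n \ S with hT
  have hTcard : T.card = n - S.card := by
    rw [hT, Finset.card_sdiff_of_subset hS, Nat.card_Icc, Nat.add_sub_cancel]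
  have hm : r - S.card ≤ T.card := by omega
  set B := S ∪ topOf T (r - S.card) with hBdef
  have hdisj : Disjoint S (topOf T (r - S.card)) := by
    apply Finset.disjoint_left.2
    intro x hx hx'
    have := topOf_subset T (r - S.card) hx'
    rw [hT, Finset.mem_sdiff] at this
    exact this.2 hx
  have hBsub : B ⊆ Finset.Icc 1 n := by
    rw [hBdef]
    apply Finset.union_subset hS
    intro x hx
    have := topOf_subset T _ hx
    rw [hT, Finset.mem_sdiff] at this
    exact this.1
  have hBcard : B.card = r := by
    rw [hBdef, Finset.card_union_of_disjoint hdisj, topOf_card hm]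
    omega
  refine ⟨B, ?_, Finset.subset_union_left⟩
  rw [mem_SB hUsub hUcard]
  refine ⟨hBsub, hBcard, ?_⟩
  intro k
  by_cases htop : ∃ x ∈ topOf T (r - S.card), x ≤ k
  · -- everything above k that is in [1,n] is in B
    obtain ⟨x, hxtop, hxk⟩ := htop
    have hsubIcc : Finset.Icc (k+1) n ∩ Finset.Icc 1 n ⊆ B := by
      intro y hy
      simp only [Finset.mem_inter, Finset.mem_Icc] at hy
      by_cases hyS : y ∈ S
      · exact Finset.mem_union_left _ hyS
      · have hyT : y ∈ T := by
          rw [hT, Finset.mem_sdiff]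
          exact ⟨Finset.mem_Icc.2 ⟨by omega, by omega⟩, hyS⟩
        exact Finset.mem_union_right _ (topOf_closed hxtop hyT (by omega))
    have h1 : (B ∩ Finset.Icc (k+1) n).card = (Finset.Icc (k+1) n ∩ Finset.Icc 1 n).card := by
      apply le_antisymm
      · apply Finset.card_le_card
        intro y hy
        simp only [Finset.mem_inter] at hy ⊢
        exact ⟨hy.2, hBsub hy.1⟩
      · apply Finset.card_le_card
        intro y hy
        exact Finset.mem_inter.2 ⟨hsubIcc hy, (Finset.mem_inter.1 hy).1⟩
    have h2 := cnt_add_suffix hBsub k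
    have h3 := cnt_add_suffix hUsub k
    have h4 : (U ∩ Finset.Icc (k+1) n).card ≤ (Finset.Icc (k+1) n ∩ Finset.Icc 1 n).card := by
      apply Finset.card_le_card
      intro y hy
      simp only [Finset.mem_inter] at hy ⊢
      exact ⟨hy.2, hUsub hy.1⟩
    omega
  · push_neg at htop
    have h1 : B ∩ Finset.Icc 1 k = S ∩ Finset.Icc 1 k := by
      ext y
      simp only [Finset.mem_inter, hBdef, Finset.mem_union, Finset.mem_Icc]
      constructor
      · rintro ⟨hy1 | hy1, hy2⟩
        · exact ⟨hy1, hy2⟩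
        · exact absurd hy2.2 (by have := htop y hy1; omega)
      · rintro ⟨hy1, hy2⟩
        exact ⟨Or.inl hy1, hy2⟩
    have : cnt B k = cnt S k := by rw [cnt, cnt, h1]
    rw [this]
    exact hcnt k

lemma famIndep_iff (hUsub : U ⊆ Finset.Icc 1 n) (hUcard : U.card = r) {S : Finset ℕ} :
    famIndep (schubertBases n r U) S ↔
      S ⊆ Finset.Icc 1 n ∧ ∀ k, cnt S k ≤ cnt U k := by
  constructor
  · rintro ⟨B, hB, hSB⟩
    rw [mem_SB hUsub hUcard] at hB
    refine ⟨hSB.trans hB.1, fun k => ?_⟩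
    calc cnt S k ≤ cnt B k := Finset.card_le_card (Finset.inter_subset_inter_right hSB)
    _ ≤ cnt U k := hB.2.2 k
  · rintro ⟨h1, h2⟩
    exact exists_basis_superset hUsub hUcard h1 h2

end Char

/-! ### Dual independence characterisation -/

section DualChar

variable {n r : ℕ} {U : Finset ℕ}

lemma mem_famDual {E : Finset ℕ} {ℬ : Finset (Finset ℕ)} {D : Finset ℕ} :
    D ∈ famDual E ℬ ↔ ∃ B ∈ ℬ, D = E \ B := by
  rw [famDual, Finset.mem_image]
  constructor
  · rintro ⟨B, hB, rfl⟩; exact ⟨B, hB, rfl⟩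
  · rintro ⟨B, hB, rfl⟩; exact ⟨B, hB, rfl⟩

lemma famDualIndep_iff (hUsub : U ⊆ Finset.Icc 1 n) (hUcard : U.card = r) {S : Finset ℕ} :
    famIndep (famDual (Finset.Icc 1 n) (schubertBases n r U)) S ↔
      S ⊆ Finset.Icc 1 n ∧
        ∀ k, (S ∩ Finset.Icc (k+1) n).card + (U ∩ Finset.Icc (k+1) n).card ≤ n - k := by
  classical
  have hrn : r ≤ n := by
    have := Finset.card_le_card hUsub
    rwa [hUcard, Nat.card_Icc, Nat.add_sub_cancel] at this
  constructor
  · rintro ⟨D, hD, hSD⟩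
    rw [mem_famDual] at hD
    obtain ⟨B, hB, rfl⟩ := hD
    rw [mem_SB hUsub hUcard] at hB
    obtain ⟨hBsub, hBcard, hBcnt⟩ := hB
    have hSsub : S ⊆ Finset.Icc 1 n := hSD.trans (Finset.sdiff_subset)
    refine ⟨hSsub, fun k => ?_⟩
    rcases Nat.lt_or_ge k n with hk | hk
    · have h1 : (S ∩ Finset.Icc (k+1) n).card ≤ ((Finset.Icc 1 n \ B) ∩ Finset.Icc (k+1) n).card :=
        Finset.card_le_card (Finset.inter_subset_inter_right hSD)
      have h2 := cnt_add_suffix (Finset.sdiff_subset (s := Finset.Icc 1 n) (t := B)) k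
      have h3 : (Finset.Icc 1 n \ B).card = n - r := by
        rw [Finset.card_sdiff_of_subset hBsub, Nat.card_Icc, hBcard]
        omega
      have h4 := cnt_sdiff hBsub (le_of_lt hk)
      have h5 := cnt_add_suffix hBsub k
      have h6 := cnt_add_suffix hUsub k
      have h7 := hBcnt k
      have h8 := cnt_le_self B k
      rw [h3] at h2
      rw [hBcard] at h5
      rw [hUcard] at h6
      omega
    · rw [suffix_empty S hk, suffix_empty U hk]
      omega
  · rintro ⟨hSsub, hQ⟩
    set T := Finset.Icc 1 n \ S with hT
    have hTsub : T ⊆ Finset.Icc 1 n := Finset.sdiff_subset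
    have hTcard : T.card = n - S.card := by
      rw [hT, Finset.card_sdiff_of_subset hSsub, Nat.card_Icc]; omega
    have hSn : S.card + r ≤ n := by
      have h0 := hQ 0
      have h1 : S ∩ Finset.Icc 1 n = S := Finset.inter_eq_left.2 hSsub
      have h2 : U ∩ Finset.Icc 1 n = U := Finset.inter_eq_left.2 hUsub
      rw [h1, h2, hUcard] at h0
      omega
    have hrT : r ≤ T.card := by omega
    set B := topOf T r with hBdef
    have hBsubT : B ⊆ T := topOf_subset T r
    have hBsub : B ⊆ Finset.Icc 1 n := hBsubT.trans hTsub
    have hBcard : B.card = r := topOf_card hrT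
    have hTsuffix : ∀ k, k ≤ n →
        (T ∩ Finset.Icc (k+1) n).card + (S ∩ Finset.Icc (k+1) n).card = n - k := by
      intro k hk
      have h1 := cnt_add_suffix hTsub k
      have h2 := cnt_add_suffix hSsub k
      have h3 := cnt_sdiff hSsub hk
      rw [hTcard] at h1
      rw [← hT] at h3
      omega
    have hBmem : B ∈ schubertBases n r U := by
      rw [mem_SB hUsub hUcard]
      refine ⟨hBsub, hBcard, fun k => ?_⟩
      rcases Nat.lt_or_ge k n with hk | hk
      · by_cases htop : ∃ x ∈ B, x ≤ k
        · obtain ⟨x, hx, hxk⟩ := htop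
          have hsub2 : T ∩ Finset.Icc (k+1) n ⊆ B := by
            intro y hy
            simp only [Finset.mem_inter, Finset.mem_Icc] at hy
            exact topOf_closed hx hy.1 (by omega)
          have h1 : (T ∩ Finset.Icc (k+1) n).card ≤ (B ∩ Finset.Icc (k+1) n).card := by
            apply Finset.card_le_card
            intro y hy
            exact Finset.mem_inter.2 ⟨hsub2 hy, (Finset.mem_inter.1 hy).2⟩
          have h2 := hTsuffix k (le_of_lt hk)
          have h3 := hQ k
          have h4 := cnt_add_suffix hBsub k
          have h5 := cnt_add_suffix hUsub k
          rw [hBcard] at h4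
          rw [hUcard] at h5
          omega
        · push_neg at htop
          have : B ∩ Finset.Icc 1 k = ∅ := by
            rw [Finset.eq_empty_iff_forall_notMem]
            intro y hy
            simp only [Finset.mem_inter, Finset.mem_Icc] at hy
            have := htop y hy.1
            omega
          rw [cnt, this]
          simp
      · rw [cnt_of_ge hBsub hk, cnt_of_ge hUsub hk, hBcard, hUcard]
    refine ⟨Finset.Icc 1 n \ B, ?_, ?_⟩
    · rw [mem_famDual]; exact ⟨B, hBmem, rfl⟩
    · intro x hx
      rw [Finset.mem_sdiff]
      refine ⟨hSsub hx, fun hxB => ?_⟩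
      have := hBsubT hxB
      rw [hT, Finset.mem_sdiff] at this
      exact this.2 hx

end DualChar

/-! ### External activity -/

section Ext

variable {n r : ℕ} {U : Finset ℕ}

lemma extActive_iff (hUsub : U ⊆ Finset.Icc 1 n) (hUcard : U.card = r) (h1U : 1 ∈ U)
    {B : Finset ℕ} (hB : B ∈ schubertBases n r U) {e : ℕ} :
    ExtActive (Finset.Icc 1 n) (schubertBases n r U) B e ↔
      e ∈ Finset.Icc 1 n ∧ e ∉ B ∧ ∀ x ∈ B, e < x := by
  classical
  rw [mem_SB hUsub hUcard] at hB
  obtain ⟨hBsub, hBcard, hBcnt⟩ := hB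
  constructor
  · rintro ⟨he, heB, C, hCsub, hCcirc, heC, hemin⟩
    refine ⟨he, heB, fun x hx => ?_⟩
    by_contra hcon
    push_neg at hcon
    have hxe : x < e := by
      rcases lt_or_eq_of_le hcon with h | h
      · exact h
      · rw [h] at hx; exact absurd hx heB
    -- `insert e (B.erase x)` is independent
    have hindep : famIndep (schubertBases n r U) (insert e (B.erase x)) := by
      rw [famIndep_iff hUsub hUcard]
      constructor
      · intro y hy
        rcases Finset.mem_insert.1 hy with rfl | hy'
        · exact he
        · exact hBsub (Finset.mem_of_mem_erase hy')
      · intro k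
        have he1 : 1 ≤ e := (Finset.mem_Icc.1 he).1
        have hx1 : 1 ≤ x := (Finset.mem_Icc.1 (hBsub hx)).1
        have hxm : x ∈ B := hx
        have h1 : e ∉ B.erase x := fun h => heB (Finset.mem_of_mem_erase h)
        rw [cnt_insert h1 he1 k]
        have h2 := cnt_erase hxm hx1 k
        have h3 := hBcnt k
        by_cases hek : e ≤ k
        · have hxk : x ≤ k := by omega
          simp only [hek, hxk, if_true] at *
          omega
        · simp only [hek, if_false]
          split at h2 <;> omega
    -- hence x ∈ C, contradicting minimality
    have hxC : x ∈ C := by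
      by_contra hxC
      apply hCcirc.1
      apply famIndep_mono _ hindep
      intro y hy
      have hyC := hCsub hy
      rcases Finset.mem_insert.1 hyC with rfl | hyB
      · exact Finset.mem_insert_self _ _
      · apply Finset.mem_insert_of_mem
        apply Finset.mem_erase.2 ⟨fun h => hxC (by rwa [h] at hy), hyB⟩
    have := hemin x hxC
    omega
  · rintro ⟨he, heB, hlt⟩
    have he1 : 1 ≤ e := (Finset.mem_Icc.1 he).1
    have hen : e ≤ n := (Finset.mem_Icc.1 he).2
    -- first touch point at or after e
    have hex : ∃ t, e ≤ t ∧ cnt B t = cnt U t := by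
      refine ⟨n, hen, ?_⟩
      rw [cnt_of_ge hBsub le_rfl, cnt_of_ge hUsub le_rfl, hBcard, hUcard]
    set m := Nat.find hex with hm
    obtain ⟨hem, htouch⟩ : e ≤ m ∧ cnt B m = cnt U m := Nat.find_spec hex
    have hmlt : ∀ t, e ≤ t → t < m → cnt B t < cnt U t := by
      intro t het htm
      have := Nat.find_min hex htm
      push_neg at this
      have h2 := hBcnt t
      have := this het
      omega
    have hme : e < m := by
      rcases lt_or_eq_of_le hem with h | h
      · exact h
      · exfalso
        have hBe : cnt B e = 0 := by
          rw [cnt, Finset.card_eq_zero, Finset.eq_empty_iff_forall_notMem]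
          intro y hy
          simp only [Finset.mem_inter, Finset.mem_Icc] at hy
          have := hlt y hy.1
          omega
        have hUe : 1 ≤ cnt U e := by
          have : 1 ∈ U ∩ Finset.Icc 1 e := Finset.mem_inter.2 ⟨h1U, Finset.mem_Icc.2 ⟨le_rfl, he1⟩⟩
          have := Finset.card_pos.2 ⟨1, this⟩
          exact this
        rw [← h] at htouch
        omega
    have hmB : m ∈ B := by
      have h1 := hmlt (m-1) (by omega) (by omega)
      have h2 : m - 1 + 1 = m := by omega
      have h3 := cnt_succ B (m-1)
      have h4 := cnt_succ U (m-1)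
      rw [h2] at h3 h4
      by_contra hcon
      simp only [hcon, if_false] at h3
      split at h4 <;> omega
    -- the circuit
    set C := insert e (B ∩ Finset.Icc 1 m) with hC
    have heBm : e ∉ B ∩ Finset.Icc 1 m := fun h => heB (Finset.mem_inter.1 h).1
    have hCcard : C.card = cnt U m + 1 := by
      rw [hC, Finset.card_insert_of_notMem heBm, ← htouch]
      rfl
    have hCsub1n : C ⊆ Finset.Icc 1 n := by
      intro y hy
      rcases Finset.mem_insert.1 hy with rfl | hy'
      · exact he
      · exact hBsub (Finset.mem_inter.1 hy').1
    have hcntC : ∀ k, k < m → cnt C k ≤ cnt U k := by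
      intro k hkm
      have h0 : cnt (B ∩ Finset.Icc 1 m) k = cnt B k := by
        rw [cnt, cnt]
        congr 1
        ext y
        simp only [Finset.mem_inter, Finset.mem_Icc]
        constructor
        · rintro ⟨⟨h1, _⟩, h2⟩; exact ⟨h1, h2⟩
        · rintro ⟨h1, h2⟩; exact ⟨⟨h1, by omega⟩, h2⟩
      rw [hC, cnt_insert heBm he1, h0]
      by_cases hek : e ≤ k
      · have := hmlt k hek hkm
        simp [hek]
        omega
      · simp [hek]
        exact hBcnt k
    have hCdep : ¬ famIndep (schubertBases n r U) C := by
      rw [famIndep_iff hUsub hUcard]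
      rintro ⟨-, hcnt⟩
      have h1 := hcnt m
      have h2 : cnt C m = cnt U m + 1 := by
        have hsub : C ∩ Finset.Icc 1 m = C := by
          rw [Finset.inter_eq_left]
          intro y hy
          rcases Finset.mem_insert.1 hy with rfl | hy'
          · exact Finset.mem_Icc.2 ⟨he1, by omega⟩
          · have := (Finset.mem_inter.1 hy').2
            simp only [Finset.mem_Icc] at this ⊢
            omega
        rw [← hCcard]
        show (C ∩ Finset.Icc 1 m).card = C.card
        rw [hsub]
      omega
    have hCcirc : famCircuit (schubertBases n r U) C := by
      refine ⟨hCdep, fun C' hC' => ?_⟩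
      rw [famIndep_iff hUsub hUcard]
      refine ⟨(hC'.subset).trans hCsub1n, fun k => ?_⟩
      rcases Nat.lt_or_ge k m with hk | hk
      · calc cnt C' k ≤ cnt C k :=
              Finset.card_le_card (Finset.inter_subset_inter_right hC'.subset)
        _ ≤ cnt U k := hcntC k hk
      · have h1 : cnt C' k ≤ C'.card := Finset.card_le_card Finset.inter_subset_left
        have h2 : C'.card < C.card := Finset.card_lt_card hC'
        have h3 := cnt_mono U hk
        omega
    refine ⟨he, heB, C, ?_, hCcirc, Finset.mem_insert_self _ _, ?_⟩
    · intro y hy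
      rcases Finset.mem_insert.1 hy with rfl | hy'
      · exact Finset.mem_insert_self _ _
      · exact Finset.mem_insert_of_mem (Finset.mem_inter.1 hy').1
    · intro y hy
      rcases Finset.mem_insert.1 hy with rfl | hy'
      · exact le_rfl
      · exact le_of_lt (hlt y (Finset.mem_inter.1 hy').1)

lemma extAct_eq_one (hUsub : U ⊆ Finset.Icc 1 n) (hUcard : U.card = r) (h1U : 1 ∈ U)
    {B : Finset ℕ} (hB : B ∈ schubertBases n r U) (h1B : 1 ∉ B) (h2B : 2 ∈ B) (hn : 1 ≤ n) :
    extAct (Finset.Icc 1 n) (schubertBases n r U) B = 1 := by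
  classical
  rw [extAct]
  have : (Finset.Icc 1 n).filter (ExtActive (Finset.Icc 1 n) (schubertBases n r U) B) = {1} := by
    ext e
    simp only [Finset.mem_filter, Finset.mem_singleton]
    rw [extActive_iff hUsub hUcard h1U hB]
    constructor
    · rintro ⟨he, -, -, hlt⟩
      have h2 := hlt 2 h2B
      have := (Finset.mem_Icc.1 he).1
      omega
    · rintro rfl
      have h1 : (1:ℕ) ∈ Finset.Icc 1 n := Finset.mem_Icc.2 ⟨le_rfl, hn⟩
      refine ⟨h1, ⟨h1, h1B, fun x hx => ?_⟩⟩
      have hB' := (mem_SB hUsub hUcard).1 hB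
      have hx1 := (Finset.mem_Icc.1 (hB'.1 hx)).1
      have hxne : x ≠ 1 := fun h => h1B (h ▸ hx)
      omega
  rw [this, Finset.card_singleton]

end Ext

/-! ### Internal activity -/

section Int

variable {n r : ℕ} {U : Finset ℕ}

lemma intActive_iff (hUsub : U ⊆ Finset.Icc 1 n) (hUcard : U.card = r)
    {B : Finset ℕ} (hB : B ∈ schubertBases n r U) {i : ℕ} (hi1 : 1 ≤ i) (hin : i ≤ n) :
    IntActive (Finset.Icc 1 n) (schubertBases n r U) B i ↔
      i ∈ B ∧ cnt B (i-1) = cnt U (i-1) := by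
  classical
  have hBmem := hB
  rw [mem_SB hUsub hUcard] at hB
  obtain ⟨hBsub, hBcard, hBcnt⟩ := hB
  constructor
  · rintro ⟨hiB, C, hCsub, hCcirc, hiC, himin⟩
    refine ⟨hiB, ?_⟩
    by_contra hcon
    have hlt : cnt B (i-1) < cnt U (i-1) := lt_of_le_of_ne (hBcnt _) hcon
    set Ptouch := fun t => cnt B t = cnt U t with hPt
    set k0 := Nat.findGreatest Ptouch (i-1) with hk0
    have hP0 : Ptouch 0 := by rw [hPt]; simp [cnt_zero]
    have hk0P : Ptouch k0 := Nat.findGreatest_spec (Nat.zero_le _) hP0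
    have hk0le : k0 ≤ i - 1 := Nat.findGreatest_le _
    have hk0lt : k0 < i - 1 := by
      rcases lt_or_eq_of_le hk0le with h | h
      · exact h
      · rw [h] at hk0P; exact absurd hk0P hcon
    have hnotouch : ∀ t, k0 < t → t ≤ i - 1 → cnt B t ≠ cnt U t := by
      intro t h1 h2
      exact Nat.findGreatest_is_greatest (P := Ptouch) h1 h2
    -- find y ∉ B in (k0, i-1]
    have hy : ∃ y, k0 < y ∧ y ≤ i - 1 ∧ y ∉ B := by
      by_contra hcon2
      push_neg at hcon2
      have hfull := cnt_interval B hk0le (fun t ht1 ht2 => hcon2 t ht1 ht2)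
      have h2 := cnt_le_add U hk0le
      have h3 := hBcnt (i-1)
      rw [hk0P] at hfull
      omega
    obtain ⟨y, hy1, hy2, hyB⟩ := hy
    have hy1' : 1 ≤ y := by omega
    have hyn : y ≤ n := by omega
    have hyi : y < i := by omega
    -- B' is a basis
    set B' := insert y (B.erase i) with hB'
    have hyBe : y ∉ B.erase i := fun h => hyB (Finset.mem_of_mem_erase h)
    have hB'mem : B' ∈ schubertBases n r U := by
      rw [mem_SB hUsub hUcard]
      refine ⟨?_, ?_, ?_⟩
      · intro z hz
        rcases Finset.mem_insert.1 hz with rfl | hz'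
        · exact Finset.mem_Icc.2 ⟨hy1', hyn⟩
        · exact hBsub (Finset.mem_of_mem_erase hz')
      · rw [hB', Finset.card_insert_of_notMem hyBe, Finset.card_erase_of_mem hiB, hBcard]
        have : 1 ≤ r := by
          have : 1 ≤ B.card := Finset.card_pos.2 ⟨i, hiB⟩
          omega
        omega
      · intro k
        have e1 : cnt B' k = cnt (B.erase i) k + if y ≤ k then 1 else 0 :=
          cnt_insert hyBe hy1' k
        have e2 : cnt B k = cnt (B.erase i) k + if i ≤ k then 1 else 0 :=
          cnt_erase hiB hi1 k
        have h3 := hBcnt k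
        by_cases hyk : y ≤ k
        · by_cases hik : i ≤ k
          · simp only [hyk, hik, if_true] at e1 e2; omega
          · have hk2 : k ≤ i - 1 := by omega
            have := hnotouch k (by omega) hk2
            have h4 := hBcnt k
            simp only [hyk, hik, if_true, if_false] at e1 e2
            omega
        · simp only [hyk, if_false] at e1
          split at e2 <;> omega
    -- y must be in C
    have hyC : y ∈ C := by
      by_contra hyC
      apply hCcirc.1
      have hCD : C ⊆ Finset.Icc 1 n \ B' := by
        intro z hz
        have hz2 := hCsub hz
        rw [Finset.mem_sdiff]
        rcases Finset.mem_insert.1 hz2 with rfl | hz3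
        · refine ⟨Finset.mem_Icc.2 ⟨hi1, hin⟩, fun hzB' => ?_⟩
          rcases Finset.mem_insert.1 hzB' with h | h
          · omega
          · exact (Finset.notMem_erase _ _) h
        · rw [Finset.mem_sdiff] at hz3
          refine ⟨hz3.1, fun hzB' => ?_⟩
          rcases Finset.mem_insert.1 hzB' with h | h
          · rw [h] at hz; exact hyC hz
          · exact hz3.2 (Finset.mem_of_mem_erase h)
      exact ⟨_, mem_famDual.2 ⟨B', hB'mem, rfl⟩, hCD⟩
    have := himin y hyC
    omega
  · rintro ⟨hiB, htouch⟩
    set D0 := (Finset.Icc 1 n \ B) ∩ Finset.Icc (i+1) n with hD0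
    set C := insert i D0 with hC
    have hiD0 : i ∉ D0 := by
      rw [hD0]
      intro h
      have := (Finset.mem_Icc.1 (Finset.mem_inter.1 h).2).1
      omega
    have hCsubIcc : ∀ z ∈ C, i ≤ z ∧ z ≤ n ∧ 1 ≤ z := by
      intro z hz
      rcases Finset.mem_insert.1 hz with rfl | hz'
      · exact ⟨le_rfl, hin, hi1⟩
      · rw [hD0] at hz'
        have h1 := Finset.mem_Icc.1 (Finset.mem_inter.1 hz').2
        omega
    have him1 : i - 1 + 1 = i := by omega
    -- cardinality facts
    have f1 : cnt (Finset.Icc 1 n \ B) i + D0.card = n - r := by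
      have := cnt_add_suffix (Finset.sdiff_subset (s := Finset.Icc 1 n) (t := B)) i
      rw [Finset.card_sdiff_of_subset hBsub, Nat.card_Icc, hBcard] at this
      have h' : n + 1 - 1 - r = n - r := by omega
      rw [h'] at this
      rw [hD0]
      exact this
    have f2 : cnt (Finset.Icc 1 n \ B) i + cnt B i = i := cnt_sdiff hBsub hin
    have f3 : cnt B i = cnt B (i-1) + 1 := by
      have := cnt_succ B (i-1)
      rw [him1] at this
      simp [hiB] at this
      omega
    have hCcard : C.card = D0.card + 1 := by
      rw [hC, Finset.card_insert_of_notMem hiD0]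
    have hrn : r ≤ n := by
      have := Finset.card_le_card hUsub
      rwa [hUcard, Nat.card_Icc, Nat.add_sub_cancel] at this
    have hCcirc : famCircuit (famDual (Finset.Icc 1 n) (schubertBases n r U)) C := by
      constructor
      · rw [famDualIndep_iff hUsub hUcard]
        rintro ⟨-, hQ⟩
        have h1 := hQ (i-1)
        have hCfull : C ∩ Finset.Icc (i-1+1) n = C := by
          rw [Finset.inter_eq_left]
          intro z hz
          have := hCsubIcc z hz
          rw [Finset.mem_Icc]
          omega
        rw [hCfull] at h1
        have h2 := cnt_add_suffix hUsub (i-1)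
        rw [hUcard] at h2
        rw [him1] at h1 h2
        omega
      · intro C' hC'
        rw [famDualIndep_iff hUsub hUcard]
        have hC'C := hC'.subset
        constructor
        · intro z hz
          have := hCsubIcc z (hC'C hz)
          rw [Finset.mem_Icc]
          omega
        · intro k
          rcases Nat.lt_or_ge k n with hk | hk
          · rcases Nat.lt_or_ge k i with hki | hki
            · -- k < i : C' entirely in the suffix
              have hfull : C' ∩ Finset.Icc (k+1) n = C' := by
                rw [Finset.inter_eq_left]
                intro z hz
                have := hCsubIcc z (hC'C hz)
                rw [Finset.mem_Icc]
                omega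
              rw [hfull]
              have hcard : C'.card < C.card := Finset.card_lt_card hC'
              have h2 := cnt_add_suffix hUsub k
              rw [hUcard] at h2
              have h3 := cnt_le_add U (show k ≤ i - 1 by omega)
              have h4 := cnt_le_self B k
              omega
            · -- i ≤ k
              have hsub : C' ∩ Finset.Icc (k+1) n ⊆
                  (Finset.Icc 1 n \ B) ∩ Finset.Icc (k+1) n := by
                intro z hz
                rw [Finset.mem_inter] at hz ⊢
                refine ⟨?_, hz.2⟩
                have hz1 := hC'C hz.1
                rcases Finset.mem_insert.1 hz1 with rfl | hz2
                · have := (Finset.mem_Icc.1 hz.2).1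
                  omega
                · exact (Finset.mem_inter.1 hz2).1
              have h1 := Finset.card_le_card hsub
              have h2 := cnt_add_suffix (Finset.sdiff_subset (s := Finset.Icc 1 n) (t := B)) k
              rw [Finset.card_sdiff_of_subset hBsub, Nat.card_Icc, hBcard] at h2
              have h3 := cnt_sdiff hBsub (le_of_lt hk)
              have h4 := cnt_add_suffix hUsub k
              rw [hUcard] at h4
              have h5 := hBcnt k
              omega
          · rw [suffix_empty C' hk, suffix_empty U hk]
            omega
    refine ⟨hiB, C, ?_, hCcirc, Finset.mem_insert_self _ _, ?_⟩
    · intro z hz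
      rcases Finset.mem_insert.1 hz with rfl | hz'
      · exact Finset.mem_insert_self _ _
      · exact Finset.mem_insert_of_mem (Finset.mem_inter.1 hz').1
    · intro z hz
      exact (hCsubIcc z hz).1

lemma intAct_eq_zero_iff (hUsub : U ⊆ Finset.Icc 1 n) (hUcard : U.card = r)
    {B : Finset ℕ} (hB : B ∈ schubertBases n r U) :
    intAct (Finset.Icc 1 n) (schubertBases n r U) B = 0 ↔
      ∀ i ∈ B, cnt B (i-1) ≠ cnt U (i-1) := by
  classical
  have hB' := (mem_SB hUsub hUcard).1 hB
  rw [intAct, Finset.card_eq_zero, Finset.filter_eq_empty_iff]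
  constructor
  · intro h i hiB
    have hiI := hB'.1 hiB
    have := h hiI
    rw [intActive_iff hUsub hUcard hB (Finset.mem_Icc.1 hiI).1 (Finset.mem_Icc.1 hiI).2] at this
    tauto
  · intro h i hiI
    rw [intActive_iff hUsub hUcard hB (Finset.mem_Icc.1 hiI).1 (Finset.mem_Icc.1 hiI).2]
    rintro ⟨h1, h2⟩
    exact h i h1 h2

end Int

/-! ### Path combinatorics -/

section Paths

/-- Sum of `dx + dy` over the first `k` steps: the index in the expanded path. -/
def TT (P : List DStep) (k : ℕ) : ℕ := ((P.take k).map (fun s => s.dx + s.dy)).sum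

/-- `dy`-sum of the first `k` steps. -/
def YY (P : List DStep) (k : ℕ) : ℕ := ((P.take k).map DStep.dy).sum

/-- `dx`-sum of the first `k` steps. -/
def XX (P : List DStep) (k : ℕ) : ℕ := ((P.take k).map DStep.dx).sum

lemma pathPos_eq (P : List DStep) (k : ℕ) :
    pathPos (1,1) P k = (1 + XX P k, 1 + YY P k) := rfl

lemma expandNE_length (s : DStep) : (expandNE s).length = s.dx + s.dy := by
  cases s <;> rfl

lemma TT_zero (P : List DStep) : TT P 0 = 0 := rfl

lemma sum_take_succ_map (f : DStep → ℕ) (P : List DStep) {k : ℕ} (hk : k < P.length) :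
    ((P.take (k+1)).map f).sum = ((P.take k).map f).sum + f (P.getD k DStep.east) := by
  rw [List.map_take, List.map_take, List.take_succ, List.getElem?_map,
    List.getElem?_eq_getElem hk, List.getD_eq_getElem _ _ hk]
  simp

lemma TT_succ (P : List DStep) {k : ℕ} (hk : k < P.length) :
    TT P (k+1) = TT P k + ((P.getD k DStep.east).dx + (P.getD k DStep.east).dy) :=
  sum_take_succ_map _ P hk

lemma YY_succ (P : List DStep) {k : ℕ} (hk : k < P.length) :
    YY P (k+1) = YY P k + (P.getD k DStep.east).dy :=
  sum_take_succ_map _ P hk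

lemma XX_succ (P : List DStep) {k : ℕ} (hk : k < P.length) :
    XX P (k+1) = XX P k + (P.getD k DStep.east).dx :=
  sum_take_succ_map _ P hk

lemma TT_eq_XY (P : List DStep) (k : ℕ) : TT P k = XX P k + YY P k := by
  rw [TT, XX, YY]
  induction P.take k with
  | nil => rfl
  | cons s Q ih =>
    simp only [List.map_cons, List.sum_cons, ih]
    ring

lemma sum_take_mono (l : List ℕ) {j k : ℕ} (h : j ≤ k) :
    (l.take j).sum ≤ (l.take k).sum := by
  conv_rhs => rw [← List.take_append_drop j (l.take k)]
  rw [List.sum_append, List.take_take, min_eq_left h]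
  omega

lemma TT_mono (P : List DStep) {j k : ℕ} (h : j ≤ k) : TT P j ≤ TT P k := by
  rw [TT, TT, List.map_take, List.map_take]
  exact sum_take_mono _ h

lemma YY_mono (P : List DStep) {j k : ℕ} (h : j ≤ k) : YY P j ≤ YY P k := by
  rw [YY, YY, List.map_take, List.map_take]
  exact sum_take_mono _ h

lemma XX_mono (P : List DStep) {j k : ℕ} (h : j ≤ k) : XX P j ≤ XX P k := by
  rw [XX, XX, List.map_take, List.map_take]
  exact sum_take_mono _ h

lemma TT_lt (P : List DStep) {k : ℕ} (hk : k < P.length) : TT P k < TT P (k+1) := by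
  rw [TT_succ P hk]
  cases h : P.getD k DStep.east <;> simp [DStep.dx, DStep.dy]

/-- Length of the expanded prefix. -/
lemma flatten_take_length (P : List DStep) (k : ℕ) :
    (((P.take k).map expandNE).flatten).length = TT P k := by
  rw [List.length_flatten, List.map_map, TT]
  congr 1
  apply List.map_congr_left
  intro s _
  exact expandNE_length s

lemma flatten_split (P : List DStep) (k : ℕ) :
    (P.map expandNE).flatten =
      ((P.take k).map expandNE).flatten ++ ((P.drop k).map expandNE).flatten := by
  conv_lhs => rw [← List.take_append_drop k P]
  rw [List.map_append, List.flatten_append]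

lemma flatten_take (P : List DStep) (k : ℕ) :
    ((P.map expandNE).flatten).take (TT P k) = ((P.take k).map expandNE).flatten := by
  rw [flatten_split P k, ← flatten_take_length P k, List.take_left]

/-- Count of norths in an expanded list. -/
lemma countP_north_flatten (Q : List DStep) :
    (((Q.map expandNE).flatten).countP (· = DStep.north)) = (Q.map DStep.dy).sum := by
  induction Q with
  | nil => rfl
  | cons s Q ih =>
    rw [List.map_cons, List.flatten_cons, List.countP_append, ih, List.map_cons, List.sum_cons]
    congr 1
    cases s <;> rfl

lemma no_diag_expand (Q : List DStep) : DStep.diag ∉ (Q.map expandNE).flatten := by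
  intro h
  rw [List.mem_flatten] at h
  obtain ⟨l, hl, hmem⟩ := h
  rw [List.mem_map] at hl
  obtain ⟨s, _, rfl⟩ := hl
  cases s <;> simp [expandNE] at hmem

/-- Decomposition of the flattened path at step `k`. -/
lemma flatten_decomp (P : List DStep) {k : ℕ} (hk : k < P.length) :
    (P.map expandNE).flatten =
      ((P.take k).map expandNE).flatten ++
        (expandNE (P.getD k DStep.east) ++ ((P.drop (k+1)).map expandNE).flatten) := by
  conv_lhs => rw [← List.take_append_drop k P]
  rw [← List.getElem_cons_drop hk]
  rw [List.map_append, List.flatten_append, List.map_cons, List.flatten_cons]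
  rw [List.getD_eq_getElem _ _ hk]

lemma flatten_getD_TT (P : List DStep) {k : ℕ} (hk : k < P.length) (o : ℕ)
    (ho : o < (expandNE (P.getD k DStep.east)).length) :
    ((P.map expandNE).flatten).getD (TT P k + o) DStep.east =
      (expandNE (P.getD k DStep.east)).getD o DStep.east := by
  rw [flatten_decomp P hk]
  rw [List.getD_append_right _ _ _ _ (by rw [flatten_take_length]; omega)]
  rw [flatten_take_length]
  have : TT P k + o - TT P k = o := by omega
  rw [this]
  rw [List.getD_append _ _ _ _ ho]

/-- Classification of indices in the expanded path. -/
lemma classify (P : List DStep) :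
    ∀ k ≤ P.length, ∀ j < TT P k,
      ∃ m < k, j = TT P m ∨ (j = TT P m + 1 ∧ P.getD m DStep.east = DStep.diag) := by
  intro k
  induction k with
  | zero => intro _ j hj; rw [TT_zero] at hj; omega
  | succ k ih =>
    intro hk j hj
    have hklen : k < P.length := by omega
    rcases Nat.lt_or_ge j (TT P k) with hjk | hjk
    · obtain ⟨m, hm, hcases⟩ := ih (by omega) j hjk
      exact ⟨m, by omega, hcases⟩
    · rw [TT_succ P hklen] at hj
      refine ⟨k, by omega, ?_⟩
      cases h : P.getD k DStep.east <;> rw [h] at hj <;> simp [DStep.dx, DStep.dy] at hj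
      · left; omega
      · left; omega
      · rcases Nat.lt_or_ge j (TT P k + 1) with h2 | h2
        · left; omega
        · right; exact ⟨by omega, rfl⟩

end Paths

/-! ### The basis of a Delannoy path -/

section DB

lemma mem_northSet {M : List DStep} {i : ℕ} :
    i ∈ northSet M ↔ 1 ≤ i ∧ i - 1 < M.length ∧ M.getD (i-1) DStep.east = DStep.north := by
  rw [northSet, Finset.mem_image]
  constructor
  · rintro ⟨k, hk, rfl⟩
    rw [Finset.mem_filter, Finset.mem_range] at hk
    refine ⟨by omega, by simpa using hk.1, by simpa using hk.2⟩
  · rintro ⟨h1, h2, h3⟩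
    refine ⟨i - 1, ?_, by omega⟩
    rw [Finset.mem_filter, Finset.mem_range]
    exact ⟨h2, h3⟩

lemma cnt_northSet (M : List DStep) (t : ℕ) :
    cnt (northSet M) t = (M.take t).countP (· = DStep.north) := by
  induction t with
  | zero => rw [cnt_zero]; rfl
  | succ t ih =>
    rw [cnt_succ, ih, List.take_succ, List.countP_append]
    congr 1
    by_cases hmem : t + 1 ∈ northSet M
    · rw [if_pos hmem]
      rw [mem_northSet] at hmem
      obtain ⟨-, h2, h3⟩ := hmem
      simp only [Nat.add_sub_cancel] at h2 h3
      rw [List.getElem?_eq_getElem h2]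
      rw [List.getD_eq_getElem _ _ h2] at h3
      simp [h3]
    · rw [if_neg hmem]
      rw [mem_northSet] at hmem
      simp only [Nat.add_sub_cancel] at hmem
      push_neg at hmem
      by_cases ht : t < M.length
      · have h3 := hmem (by omega) ht
        rw [List.getElem?_eq_getElem ht]
        rw [List.getD_eq_getElem _ _ ht] at h3
        simp [List.countP_cons, h3]
      · rw [List.getElem?_eq_none (by omega)]
        rfl

lemma northSet_subset (M : List DStep) : northSet M ⊆ Finset.Icc 1 M.length := by
  intro i hi
  rw [mem_northSet] at hi
  rw [Finset.mem_Icc]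
  omega

lemma card_northSet (M : List DStep) : (northSet M).card = M.countP (· = DStep.north) := by
  rw [← cnt_of_ge (northSet_subset M) le_rfl, cnt_northSet, List.take_length]

variable {P : List DStep}

lemma fullPath_length : (fullPath P).length = 2 + TT P P.length := by
  rw [fullPath]
  simp only [List.length_cons]
  have := flatten_take_length P P.length
  rw [List.take_length] at this
  rw [this]
  omega

lemma cnt_dB_two_add (j : ℕ) :
    cnt (delannoyBasis P) (2 + j) =
      1 + (((P.map expandNE).flatten.take j).countP (· = DStep.north)) := by
  rw [delannoyBasis, cnt_northSet]
  have : (2 + j) = (j + 1) + 1 := by omega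
  rw [this, fullPath]
  rw [List.take_succ_cons, List.take_succ_cons]
  rw [List.countP_cons, List.countP_cons]
  simp [DStep.east, DStep.north]
  omega

lemma cnt_dB_TT {k : ℕ} (hk : k ≤ P.length) :
    cnt (delannoyBasis P) (2 + TT P k) = 1 + YY P k := by
  rw [cnt_dB_two_add, flatten_take]
  congr 1
  have := countP_north_flatten (P.take k)
  rw [this, YY]

lemma cnt_dB_diag {k : ℕ} (hk : k < P.length) (hd : P.getD k DStep.east = DStep.diag) :
    cnt (delannoyBasis P) (2 + (TT P k + 1)) = 2 + YY P k := by
  rw [cnt_dB_two_add]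
  rw [flatten_decomp P hk]
  have hlen : (((P.take k).map expandNE).flatten).length = TT P k := flatten_take_length P k
  rw [List.take_append]
  rw [List.take_of_length_le (by omega), hlen]
  have h2 : TT P k + 1 - TT P k = 1 := by omega
  rw [h2, List.countP_append]
  rw [hd]
  have : (expandNE DStep.diag ++ ((P.drop (k+1)).map expandNE).flatten).take 1
      = [DStep.north] := rfl
  rw [this]
  have := countP_north_flatten (P.take k)
  rw [this, YY]
  simp [List.countP_cons]
  omega

lemma cnt_dB_zero : cnt (delannoyBasis P) 0 = 0 := cnt_zero _

lemma cnt_dB_one : cnt (delannoyBasis P) 1 = 0 := by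
  rw [delannoyBasis, cnt_northSet, fullPath]
  rfl

lemma one_notin_dB : 1 ∉ delannoyBasis P := by
  rw [delannoyBasis, mem_northSet]
  rintro ⟨-, -, h⟩
  simp [fullPath] at h

lemma two_mem_dB : 2 ∈ delannoyBasis P := by
  rw [delannoyBasis, mem_northSet, fullPath_length]
  refine ⟨by omega, by omega, rfl⟩

lemma fullPath_getD_two_add (j : ℕ) :
    (fullPath P).getD (2+j) DStep.east = ((P.map expandNE).flatten).getD j DStep.east := by
  rw [fullPath]
  have : 2 + j = j + 1 + 1 := by omega
  rw [this, List.getD_cons_succ, List.getD_cons_succ]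

lemma expandNE_getD_zero {s : DStep} :
    (expandNE s).getD 0 DStep.east = DStep.north ↔ (s = DStep.north ∨ s = DStep.diag) := by
  cases s <;> simp [expandNE]

lemma mem_dB_of_step {k : ℕ} (hk : k < P.length)
    (hs : P.getD k DStep.east = DStep.north ∨ P.getD k DStep.east = DStep.diag) :
    TT P k + 3 ∈ delannoyBasis P := by
  rw [delannoyBasis, mem_northSet, fullPath_length]
  have hTT : TT P k < TT P P.length := lt_of_lt_of_le (TT_lt P hk) (TT_mono P hk)
  refine ⟨by omega, by omega, ?_⟩
  have h1 : TT P k + 3 - 1 = 2 + TT P k := by omega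
  rw [h1, fullPath_getD_two_add]
  have h2 := flatten_getD_TT P hk 0 (by rw [expandNE_length]; cases h : P.getD k DStep.east <;> simp [DStep.dx, DStep.dy])
  rw [Nat.add_zero] at h2
  rw [h2]
  exact expandNE_getD_zero.2 hs

lemma dB_mem_ge3 {i : ℕ} (hi : i ∈ delannoyBasis P) (h3 : 3 ≤ i) :
    ∃ k < P.length, i = TT P k + 3 ∧
      (P.getD k DStep.east = DStep.north ∨ P.getD k DStep.east = DStep.diag) := by
  rw [delannoyBasis, mem_northSet, fullPath_length] at hi
  obtain ⟨-, hlen, hnorth⟩ := hi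
  have h1 : i - 1 = 2 + (i - 3) := by omega
  rw [h1, fullPath_getD_two_add] at hnorth
  have h2 : i - 3 < TT P P.length := by omega
  obtain ⟨m, hm, hcases⟩ := classify P P.length le_rfl (i-3) h2
  rcases hcases with h | ⟨h, hdiag⟩
  · refine ⟨m, hm, by omega, ?_⟩
    rw [h] at hnorth
    have h4 := flatten_getD_TT P hm 0 (by rw [expandNE_length]; cases hx : P.getD m DStep.east <;> simp [DStep.dx, DStep.dy])
    rw [Nat.add_zero] at h4
    rw [h4] at hnorth
    exact expandNE_getD_zero.1 hnorth
  · exfalso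
    rw [h] at hnorth
    have h4 := flatten_getD_TT P hm 1 (by rw [expandNE_length, hdiag]; simp [DStep.dx, DStep.dy])
    rw [h4] at hnorth
    rw [hdiag] at hnorth
    simp [expandNE] at hnorth

lemma dB_subset : delannoyBasis P ⊆ Finset.Icc 1 (2 + TT P P.length) := by
  rw [delannoyBasis, ← fullPath_length]
  exact northSet_subset _

lemma dB_card : (delannoyBasis P).card = 1 + YY P P.length := by
  rw [delannoyBasis, card_northSet, fullPath]
  rw [List.countP_cons, List.countP_cons]
  have := countP_north_flatten P
  simp only [this]
  have h2 : YY P P.length = (P.map DStep.dy).sum := by rw [YY, List.take_length]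
  rw [h2]
  simp [DStep.east, DStep.north]
  omega

end DB

/-! ### Delannoy paths and bases -/

section Main

variable {n r : ℕ} {U : Finset ℕ} {P : List DStep}

lemma belowPath_iff {x y : ℕ} : belowPath U (x, y) ↔ y ≤ cnt U (x + y) := Iff.rfl

lemma delannoy_nums (hUsub : U ⊆ Finset.Icc 1 n) (hUcard : U.card = r)
    (hP : IsDelannoy n r U P) :
    1 ≤ r ∧ r + 1 ≤ n ∧ 1 + XX P P.length = n - r ∧ 1 + YY P P.length = r ∧
      2 + TT P P.length = n := by
  have hend := hP.1
  rw [pathPos_eq] at hend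
  have h1 : 1 + XX P P.length = n - r := congrArg Prod.fst hend
  have h2 : 1 + YY P P.length = r := congrArg Prod.snd hend
  have hrn : r ≤ n := by
    have := Finset.card_le_card hUsub
    rwa [hUcard, Nat.card_Icc, Nat.add_sub_cancel] at this
  have hTT := TT_eq_XY P P.length
  refine ⟨by omega, by omega, h1, h2, by omega⟩

lemma one_mem_U (hUsub : U ⊆ Finset.Icc 1 n) (hUcard : U.card = r) (hn : 1 ≤ n)
    (hloopless : ∀ e ∈ Finset.Icc 1 n, ∃ B ∈ schubertBases n r U, e ∈ B) : 1 ∈ U := by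
  obtain ⟨B, hB, h1B⟩ := hloopless 1 (Finset.mem_Icc.2 ⟨le_rfl, hn⟩)
  rw [mem_SB hUsub hUcard] at hB
  have h1 : 1 ≤ cnt B 1 := by
    apply Finset.card_pos.2
    exact ⟨1, Finset.mem_inter.2 ⟨h1B, Finset.mem_Icc.2 ⟨le_rfl, le_rfl⟩⟩⟩
  have h2 := hB.2.2 1
  have h3 : 0 < cnt U 1 := by omega
  obtain ⟨x, hx⟩ := Finset.card_pos.1 h3
  have := Finset.mem_inter.1 hx
  have hx1 := Finset.mem_Icc.1 this.2
  have : x = 1 := by omega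
  rw [← this]
  exact (Finset.mem_inter.1 hx).1

lemma n_notin_U (hUsub : U ⊆ Finset.Icc 1 n) (hUcard : U.card = r) (hn : 1 ≤ n)
    (hcoloopless : ∀ e ∈ Finset.Icc 1 n, ∃ B ∈ schubertBases n r U, e ∉ B) : n ∉ U := by
  intro hnU
  obtain ⟨B, hB, hnB⟩ := hcoloopless n (Finset.mem_Icc.2 ⟨hn, le_rfl⟩)
  rw [mem_SB hUsub hUcard] at hB
  obtain ⟨hBsub, hBcard, hBcnt⟩ := hB
  have e1 : cnt U n = r := by rw [cnt_of_ge hUsub le_rfl, hUcard]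
  have e2 : cnt B n = r := by rw [cnt_of_ge hBsub le_rfl, hBcard]
  have hn1 : n - 1 + 1 = n := by omega
  have e3 := cnt_succ U (n-1)
  have e4 := cnt_succ B (n-1)
  rw [hn1] at e3 e4
  have e5 := hBcnt (n-1)
  simp only [hnU, if_true] at e3
  simp only [hnB, if_false] at e4
  omega

/-- Basis criterion for `B_P`. -/
lemma dB_mem_SB_iff (hUsub : U ⊆ Finset.Icc 1 n) (hUcard : U.card = r)
    (hP : IsDelannoy n r U P) :
    delannoyBasis P ∈ schubertBases n r U ↔
      ∀ k, k < P.length → P.getD k DStep.east = DStep.diag →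
        1 + YY P k + 1 ≤ cnt U (2 + TT P k + 1) := by
  obtain ⟨hr1, hrn, hX, hY, hTL⟩ := delannoy_nums hUsub hUcard hP
  have hsub : delannoyBasis P ⊆ Finset.Icc 1 n := by
    have := dB_subset (P := P)
    rwa [hTL] at this
  have hcard : (delannoyBasis P).card = r := by rw [dB_card]; omega
  constructor
  · intro hB k hk hdiag
    rw [mem_SB hUsub hUcard] at hB
    have h1 := hB.2.2 (2 + TT P k + 1)
    have h2 : 2 + (TT P k + 1) = 2 + TT P k + 1 := by omega
    have h3 := cnt_dB_diag hk hdiag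
    rw [h2] at h3
    omega
  · intro hdg
    rw [mem_SB hUsub hUcard]
    refine ⟨hsub, hcard, fun t => ?_⟩
    rcases Nat.lt_or_ge t 2 with ht | ht
    · interval_cases t
      · rw [cnt_dB_zero]; omega
      · rw [cnt_dB_one]; omega
    · rcases Nat.lt_or_ge t n with htn | htn
      · have hj : t - 2 < TT P P.length := by omega
        obtain ⟨m, hm, hcases⟩ := classify P P.length le_rfl (t-2) hj
        rcases hcases with h | ⟨h, hdiag⟩
        · have ht2 : t = 2 + TT P m := by omega
          rw [ht2, cnt_dB_TT (le_of_lt hm)]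
          have hbel := hP.2 m (le_of_lt hm)
          rw [pathPos_eq, belowPath_iff] at hbel
          have harith : 1 + XX P m + (1 + YY P m) = 2 + TT P m := by
            rw [TT_eq_XY]; omega
          rwa [harith] at hbel
        · have ht2 : t = 2 + TT P m + 1 := by omega
          have h3 := cnt_dB_diag hm hdiag
          have h2 : 2 + (TT P m + 1) = 2 + TT P m + 1 := by omega
          rw [h2] at h3
          rw [ht2, h3]
          have := hdg m hm hdiag
          omega
      · have e1 : cnt (delannoyBasis P) t = r := by rw [cnt_of_ge hsub htn, hcard]
        have e2 : cnt U t = r := by rw [cnt_of_ge hUsub htn, hUcard]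
        omega

/-- If `i = TT k + 3` is a touch point coming from a north-starting step,
then the north step it crosses is a `U`-segment. -/
lemma touch_to_uVertSeg (hUsub : U ⊆ Finset.Icc 1 n) (hUcard : U.card = r)
    (hB : delannoyBasis P ∈ schubertBases n r U)
    {k : ℕ} (hk : k < P.length)
    (hstep : P.getD k DStep.east = DStep.north ∨ P.getD k DStep.east = DStep.diag)
    (htouch : cnt (delannoyBasis P) (2 + TT P k) = cnt U (2 + TT P k)) :
    uVertSeg U (1 + XX P k) (1 + YY P k) := by
  rw [mem_SB hUsub hUcard] at hB
  set i := TT P k + 3 with hi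
  have hiB : i ∈ delannoyBasis P := mem_dB_of_step hk hstep
  have e0 : cnt (delannoyBasis P) (2 + TT P k) = 1 + YY P k := cnt_dB_TT (le_of_lt hk)
  have e1 : 2 + TT P k + 1 = i := by omega
  have e2 := cnt_succ (delannoyBasis P) (2 + TT P k)
  have e3 := cnt_succ U (2 + TT P k)
  rw [e1] at e2 e3
  simp only [hiB, if_true] at e2
  have e4 := hB.2.2 i
  have hiU : i ∈ U := by
    by_contra hcon
    simp only [hcon, if_false] at e3
    omega
  simp only [hiU, if_true] at e3
  have harith : 1 + XX P k + (1 + YY P k) + 1 = i := by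
    rw [hi, TT_eq_XY]; omega
  constructor
  · rw [harith]; exact hiU
  · show cnt U (1 + XX P k + (1 + YY P k) + 1) = 1 + YY P k + 1
    rw [harith]
    omega

/-- Conversely a `U`-segment crossing yields a touch point. -/
lemma uVertSeg_to_touch {k : ℕ} (hk : k < P.length)
    (hseg : uVertSeg U (1 + XX P k) (1 + YY P k)) (hiU' : True) :
    cnt (delannoyBasis P) (2 + TT P k) = cnt U (2 + TT P k) ∧ (TT P k + 3) ∈ U := by
  obtain ⟨hmem, hcnt⟩ := hseg
  have harith : 1 + XX P k + (1 + YY P k) + 1 = TT P k + 3 := by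
    rw [TT_eq_XY]; omega
  rw [harith] at hmem hcnt
  have e1 := cnt_succ U (2 + TT P k)
  have e2 : 2 + TT P k + 1 = TT P k + 3 := by omega
  rw [e2] at e1
  simp only [hmem, if_true] at e1
  have e3 : cnt (delannoyBasis P) (2 + TT P k) = 1 + YY P k := cnt_dB_TT (le_of_lt hk)
  have hcnt' : cnt U (TT P k + 3) = 1 + YY P k + 1 := hcnt
  refine ⟨by omega, hmem⟩

end Main

/-! ### Injectivity -/

section Inj

lemma fullPath_no_diag {P : List DStep} : DStep.diag ∉ fullPath P := by
  rw [fullPath]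
  intro h
  rcases List.mem_cons.1 h with h | h
  · exact DStep.noConfusion h
  · rcases List.mem_cons.1 h with h | h
    · exact DStep.noConfusion h
    · exact no_diag_expand P h

lemma northSet_ext {M N : List DStep} (hlen : M.length = N.length)
    (hM : DStep.diag ∉ M) (hN : DStep.diag ∉ N) (h : northSet M = northSet N) : M = N := by
  apply List.ext_getElem hlen
  intro k h1 h2
  have hiff : M[k] = DStep.north ↔ N[k] = DStep.north := by
    have m1 : k + 1 ∈ northSet M ↔ M[k] = DStep.north := by
      rw [mem_northSet]
      simp only [Nat.add_sub_cancel]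
      constructor
      · rintro ⟨-, -, h3⟩
        rwa [List.getD_eq_getElem _ _ h1] at h3
      · intro h3
        exact ⟨by omega, h1, by rwa [List.getD_eq_getElem _ _ h1]⟩
    have m2 : k + 1 ∈ northSet N ↔ N[k] = DStep.north := by
      rw [mem_northSet]
      simp only [Nat.add_sub_cancel]
      constructor
      · rintro ⟨-, -, h3⟩
        rwa [List.getD_eq_getElem _ _ h2] at h3
      · intro h3
        exact ⟨by omega, h2, by rwa [List.getD_eq_getElem _ _ h2]⟩
    rw [← m1, ← m2, h]
  have hMk : M[k] ≠ DStep.diag := fun hc => hM (hc ▸ List.getElem_mem h1)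
  have hNk : N[k] ≠ DStep.diag := fun hc => hN (hc ▸ List.getElem_mem h2)
  cases hm : M[k] <;> cases hn : N[k] <;>
    simp_all

lemma mem_diagIndices {P : List DStep} {k : ℕ} :
    k ∈ diagIndices P ↔ k < P.length ∧ P.getD k DStep.east = DStep.diag := by
  rw [diagIndices, Finset.mem_filter, Finset.mem_range]

lemma diagIndices_zero_cons {s : DStep} {P : List DStep} :
    0 ∈ diagIndices (s :: P) ↔ s = DStep.diag := by
  rw [mem_diagIndices]
  simp

lemma diagIndices_succ_cons {s : DStep} {P : List DStep} {k : ℕ} :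
    k + 1 ∈ diagIndices (s :: P) ↔ k ∈ diagIndices P := by
  rw [mem_diagIndices, mem_diagIndices]
  simp [List.getD_cons_succ]

lemma diagIndices_tail_eq {s t : DStep} {P Q : List DStep}
    (h : diagIndices (s :: P) = diagIndices (t :: Q)) : diagIndices P = diagIndices Q := by
  ext k
  rw [← diagIndices_succ_cons (s := s) (P := P), ← diagIndices_succ_cons (s := t) (P := Q), h]

lemma unflatten : ∀ {P Q : List DStep},
    (P.map expandNE).flatten = (Q.map expandNE).flatten →
    diagIndices P = diagIndices Q → P = Q := by
  intro P
  induction P with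
  | nil =>
    intro Q hf _
    cases Q with
    | nil => rfl
    | cons q Q' =>
      exfalso
      rw [List.map_cons, List.flatten_cons] at hf
      cases q <;> simp [expandNE] at hf
  | cons p P' ih =>
    intro Q hf hD
    cases Q with
    | nil =>
      exfalso
      rw [List.map_cons, List.flatten_cons] at hf
      cases p <;> simp [expandNE] at hf
    | cons q Q' =>
      have hzero : p = DStep.diag ↔ q = DStep.diag := by
        rw [← diagIndices_zero_cons (P := P'), ← diagIndices_zero_cons (P := Q'), hD]
      rw [List.map_cons, List.flatten_cons, List.map_cons, List.flatten_cons] at hf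
      by_cases hp : p = DStep.diag
      · have hq : q = DStep.diag := hzero.1 hp
        subst hp; subst hq
        simp only [expandNE, List.cons_append, List.nil_append, List.cons.injEq, true_and] at hf
        have := ih hf (diagIndices_tail_eq hD)
        rw [this]
      · have hq : q ≠ DStep.diag := fun h => hp (hzero.2 h)
        have hep : expandNE p = [p] := by cases p <;> simp [expandNE] at hp ⊢
        have heq : expandNE q = [q] := by cases q <;> simp [expandNE] at hq ⊢
        rw [hep, heq] at hf
        simp only [List.cons_append, List.nil_append, List.cons.injEq] at hf
        rw [hf.1, ih hf.2 (diagIndices_tail_eq hD)]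

end Inj

/-- For a loopless and coloopless Schubert matroid `SM(U)` on `[n]` of
rank `r`: (a) the map sending a Delannoy path `P` associated to `SM(U)` to the pair
`(B_P, D_P)`, where `D_P` is the set of indices of the diagonal steps of `P`, is
injective; and (b) a Delannoy path `P` associated to `SM(U)` is admissible if and only if
`B_P` is a basis of `SM(U)` with `i(B_P) = 0` and `e(B_P) = 1`. -/
theorem statement2 (n r : ℕ) (U : Finset ℕ) (hUsub : U ⊆ Finset.Icc 1 n)
    (hUcard : U.card = r)
    (hloopless : ∀ e ∈ Finset.Icc 1 n, ∃ B ∈ schubertBases n r U, e ∈ B)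
    (hcoloopless : ∀ e ∈ Finset.Icc 1 n, ∃ B ∈ schubertBases n r U, e ∉ B) :
    (∀ P Q : List DStep, IsDelannoy n r U P → IsDelannoy n r U Q →
      delannoyBasis P = delannoyBasis Q → diagIndices P = diagIndices Q → P = Q) ∧
    (∀ P : List DStep, IsDelannoy n r U P →
      (IsAdmissible n r U P ↔
        delannoyBasis P ∈ schubertBases n r U ∧
        intAct (Finset.Icc 1 n) (schubertBases n r U) (delannoyBasis P) = 0 ∧
        extAct (Finset.Icc 1 n) (schubertBases n r U) (delannoyBasis P) = 1)) := by
  constructor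
  · -- (a) injectivity
    intro P Q hP hQ hBeq hDeq
    obtain ⟨_, _, _, _, hTLP⟩ := delannoy_nums hUsub hUcard hP
    obtain ⟨_, _, _, _, hTLQ⟩ := delannoy_nums hUsub hUcard hQ
    have hlen : (fullPath P).length = (fullPath Q).length := by
      rw [fullPath_length, fullPath_length]; omega
    have hfull : fullPath P = fullPath Q :=
      northSet_ext hlen fullPath_no_diag fullPath_no_diag hBeq
    rw [fullPath, fullPath] at hfull
    simp only [List.cons.injEq, true_and] at hfull
    exact unflatten hfull hDeq
  · -- (b) admissibility criterion
    intro P hP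
    obtain ⟨hr1, hrn, hX, hY, hTL⟩ := delannoy_nums hUsub hUcard hP
    have hn1 : 1 ≤ n := by omega
    have h1U : 1 ∈ U := one_mem_U hUsub hUcard hn1 hloopless
    have hnU : n ∉ U := n_notin_U hUsub hUcard hn1 hcoloopless
    have hU1 : 1 ≤ cnt U 1 := by
      apply Finset.card_pos.2
      exact ⟨1, Finset.mem_inter.2 ⟨h1U, Finset.mem_Icc.2 ⟨le_rfl, le_rfl⟩⟩⟩
    constructor
    · rintro ⟨-, hadm⟩
      have hbasis : delannoyBasis P ∈ schubertBases n r U := by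
        rw [dB_mem_SB_iff hUsub hUcard hP]
        intro k hk hdiag
        have hget : P.get ⟨k, hk⟩ = DStep.diag := by
          rw [List.get_eq_getElem, ← List.getD_eq_getElem P DStep.east hk]
          exact hdiag
        have hcond := (hadm k hk).2 hget
        have hbel := hcond.1
        rw [pathPos_eq] at hbel
        simp only at hbel
        rw [belowPath_iff] at hbel
        have harith : 1 + XX P k + (1 + YY P k + 1) = 2 + TT P k + 1 := by
          rw [TT_eq_XY]; omega
        rwa [harith] at hbel
      refine ⟨hbasis, ?_, ?_⟩
      · rw [intAct_eq_zero_iff hUsub hUcard hbasis]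
        intro i hiB htouch
        rcases Nat.lt_or_ge i 3 with hi3 | hi3
        · -- i = 1 or 2
          have hi1 : i ≠ 1 := fun h => one_notin_dB (h ▸ hiB)
          have hi0 : 1 ≤ i := by
            have := dB_subset hiB
            have := (Finset.mem_Icc.1 this).1
            omega
          have hi2 : i = 2 := by omega
          rw [hi2] at htouch
          have h1 : cnt (delannoyBasis P) 1 = 0 := cnt_dB_one
          rw [show (2:ℕ) - 1 = 1 by omega] at htouch
          omega
        · obtain ⟨k, hk, hik, hstep⟩ := dB_mem_ge3 hiB hi3
          have heq : i - 1 = 2 + TT P k := by omega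
          rw [heq] at htouch
          have hseg := touch_to_uVertSeg hUsub hUcard hbasis hk hstep htouch
          rcases hstep with hnorth | hdiag
          · have hget : P.get ⟨k, hk⟩ = DStep.north := by
              rw [List.get_eq_getElem, ← List.getD_eq_getElem P DStep.east hk]
              exact hnorth
            rcases (hadm k hk).1 hget with hfin | hnseg
            · -- final step: i = n, but i ∈ U and n ∉ U
              rw [pathPos_eq] at hfin
              have e1 : 1 + XX P (k+1) = n - r := congrArg Prod.fst hfin
              have e2 : 1 + YY P (k+1) = r := congrArg Prod.snd hfin
              have e3 := XX_succ P hk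
              have e4 := YY_succ P hk
              rw [hnorth] at e3 e4
              simp only [DStep.dx, DStep.dy] at e3 e4
              have hTTk := TT_eq_XY P k
              have hiU : TT P k + 3 ∈ U := by
                have h := hseg.1
                rwa [show 1 + XX P k + (1 + YY P k) + 1 = TT P k + 3 by omega] at h
              have hin : TT P k + 3 = n := by omega
              rw [hin] at hiU
              exact hnU hiU
            · apply hnseg
              rw [pathPos_eq]
              exact hseg
          · have hget : P.get ⟨k, hk⟩ = DStep.diag := by
              rw [List.get_eq_getElem, ← List.getD_eq_getElem P DStep.east hk]
              exact hdiag
            exact ((hadm k hk).2 hget).2 (by rw [pathPos_eq]; exact hseg)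
      · exact extAct_eq_one hUsub hUcard h1U hbasis one_notin_dB two_mem_dB hn1
    · rintro ⟨hbasis, hint, -⟩
      rw [intAct_eq_zero_iff hUsub hUcard hbasis] at hint
      refine ⟨hP, fun k hk => ?_⟩
      have hnoseg : (P.getD k DStep.east = DStep.north ∨ P.getD k DStep.east = DStep.diag) →
          ¬ uVertSeg U (1 + XX P k) (1 + YY P k) := by
        intro hstep hseg
        obtain ⟨htouch, -⟩ := uVertSeg_to_touch hk hseg trivial
        have hiB := mem_dB_of_step hk hstep
        have := hint (TT P k + 3) hiB
        rw [show TT P k + 3 - 1 = 2 + TT P k by omega] at this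
        exact this htouch
      constructor
      · intro hget
        have hnorth : P.getD k DStep.east = DStep.north := by
          rw [List.getD_eq_getElem P DStep.east hk]
          exact hget
        right
        rw [pathPos_eq]
        exact hnoseg (Or.inl hnorth)
      · intro hget
        have hdiag : P.getD k DStep.east = DStep.diag := by
          rw [List.getD_eq_getElem P DStep.east hk]
          exact hget
        constructor
        · rw [pathPos_eq]
          simp only
          rw [belowPath_iff]
          have harith : 1 + XX P k + (1 + YY P k + 1) = 2 + TT P k + 1 := by
            rw [TT_eq_XY]; omega
          rw [harith]
          have := (dB_mem_SB_iff hUsub hUcard hP).1 hbasis k hk hdiag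
          omega
        · rw [pathPos_eq]
          exact hnoseg (Or.inr hdiag)
end GPoly
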